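/- Soundness of the closure axiom: in every epistemic act-utilitarian branching-time model satisfying (OAC) and (Unif-H), the formula ⊙_S[α]φ → K_α□⊙_S[α]φ is valid: if agent α subjectively ought to see to φ at a situation ⟨m,h⟩, then at every situation epistemically indistinguishable from ⟨m,h⟩ and every history through its moment, α subjectively ought to see to φ. -/
import Mathlib


/-- Formulas of the language `L_KO`. -/
inductive Form (Ags : Type) : Type
  | atom : Nat → Form Ags
  | bot  : Form Ags
  | imp  : Form Ags → Form Ags → Form Ags
  | box  : Form Ags → Form Ags
  | act  : Ags → Form Ags → Form Ags
  | know : Ags → Form Ags → Form Ags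
  | obj  : Ags → Form Ags → Form Ags
  | subj : Ags → Form Ags → Form Ags

/-- An (epistemic act-utilitarian bi-valued) branching-time model, presented
through its moments, histories, incidence relation, choice structure, states,
epistemic relation on situations, value functions and valuation. -/
structure BTM (Ags : Type) where
  M : Type                                -- moments
  Hst : Type                              -- histories
  mem : M → Hst → Prop                    -- `m ∈ h`
  choice : Ags → M → Hst → Set Hst        -- `Choice^m_α(h)`
  cells : Ags → M → Set (Set Hst)         -- `Choice^m_α`
  states : Ags → M → Set (Set Hst)        -- `State^m_α`
  eps : Ags → M → Hst → M → Hst → Prop    -- `⟨m,h⟩ ∼_α ⟨m',h'⟩`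
  valO : Hst → ℝ
  valS : Hst → ℝ
  val : Nat → M → Hst → Prop

namespace BTM

variable {Ags : Type}

/-- Moment-level indistinguishability `m ∼_α m'`. -/
def mEps (B : BTM Ags) (a : Ags) (m m' : B.M) : Prop :=
  ∃ h h', B.mem m h ∧ B.mem m' h' ∧ B.eps a m h m' h'

/-- The epistemic cluster `[L]^{m'}_α` of a set `L` of histories at moment `m`,
taken at moment `m'`. -/
def cluster (B : BTM Ags) (a : Ags) (m : B.M) (L : Set B.Hst) (m' : B.M) :
    Set B.Hst :=
  {h' | B.mem m' h' ∧ ∃ h ∈ L, B.eps a m h m' h'}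

/-- Objective dominance `L ⪯ N` at moment `m` (relativized to states). -/
def domO (B : BTM Ags) (a : Ags) (m : B.M) (L N : Set B.Hst) : Prop :=
  ∀ S ∈ B.states a m, ∀ x ∈ L ∩ S, ∀ y ∈ N ∩ S, B.valO x ≤ B.valO y

/-- Strict objective dominance. -/
def sdomO (B : BTM Ags) (a : Ags) (m : B.M) (L N : Set B.Hst) : Prop :=
  B.domO a m L N ∧ ¬ B.domO a m N L

/-- Subjective dominance `L ⪯_s N` at moment `m`, via epistemic clusters. -/
def domS (B : BTM Ags) (a : Ags) (m : B.M) (L N : Set B.Hst) : Prop :=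
  ∀ m', B.mEps a m m' → ∀ S ∈ B.states a m',
    ∀ x ∈ B.cluster a m L m' ∩ S, ∀ y ∈ B.cluster a m N m' ∩ S,
      B.valS x ≤ B.valS y

/-- Strict subjective dominance. -/
def sdomS (B : BTM Ags) (a : Ags) (m : B.M) (L N : Set B.Hst) : Prop :=
  B.domS a m L N ∧ ¬ B.domS a m N L

/-- Satisfaction at a situation `⟨m,h⟩` (with the sure-thing-principle
semantics for the ought operators). -/
def sat (B : BTM Ags) : Form Ags → B.M → B.Hst → Prop
  | Form.atom n, m, h => B.val n m h
  | Form.bot, _, _ => False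
  | Form.imp φ ψ, m, h => sat B φ m h → sat B ψ m h
  | Form.box φ, m, _ => ∀ h', B.mem m h' → sat B φ m h'
  | Form.act a φ, m, h => ∀ h' ∈ B.choice a m h, sat B φ m h'
  | Form.know a φ, m, h => ∀ m' h', B.eps a m h m' h' → sat B φ m' h'
  | Form.obj a φ, m, _ =>
      ∀ L ∈ B.cells a m, (∃ hL ∈ L, ¬ sat B φ m hL) →
        ∃ L' ∈ B.cells a m, B.sdomO a m L L' ∧
          ∀ L'' ∈ B.cells a m, (L'' = L' ∨ B.domO a m L' L'') →
            ∀ h'' ∈ L'', sat B φ m h''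
  | Form.subj a φ, m, _ =>
      ∀ L ∈ B.cells a m,
        (∃ m', B.mEps a m m' ∧ ∃ hL ∈ B.cluster a m L m', ¬ sat B φ m' hL) →
          ∃ L' ∈ B.cells a m, B.sdomS a m L L' ∧
            ∀ L'' ∈ B.cells a m, (L'' = L' ∨ B.domS a m L' L'') →
              ∀ m'', B.mEps a m m'' →
                ∀ h'' ∈ B.cluster a m L'' m'', sat B φ m'' h''

end BTM

open BTM

/-- Transfer of the subjective ought along moment-level indistinguishability. -/
lemma subj_transfer {Ags : Type} (B : BTM Ags) (a : Ags) (φ : Form Ags)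
    (heps_symm : ∀ b m h m' h', B.eps b m h m' h' → B.eps b m' h' m h)
    (heps_trans : ∀ b m h m' h' m'' h'',
      B.eps b m h m' h' → B.eps b m' h' m'' h'' → B.eps b m h m'' h'')
    (heps_mem : ∀ b m h m' h', B.eps b m h m' h' → B.mem m h ∧ B.mem m' h')
    (hchoice_mem : ∀ b m h, B.mem m h → h ∈ B.choice b m h)
    (hchoice_eq : ∀ b m h h', B.mem m h → h' ∈ B.choice b m h →
      B.choice b m h' = B.choice b m h)
    (hcells : ∀ b m, B.cells b m = {C | ∃ h, B.mem m h ∧ C = B.choice b m h})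
    (hOAC : ∀ b m h m' h', B.eps b m h m' h' →
      ∀ h₂ ∈ B.choice b m h, B.eps b m h₂ m' h')
    (hUnif : ∀ b m h m' h', B.eps b m h m' h' →
      ∀ h₂, B.mem m h₂ → ∃ h₂', B.mem m' h₂' ∧ B.eps b m h₂ m' h₂')
    (m m' : B.M) (h h' : B.Hst)
    (hmm' : B.mEps a m m')
    (hs : B.sat (Form.subj a φ) m h) :
    B.sat (Form.subj a φ) m' h' := by
  -- moment epistemic relation facts
  have mEps_symm : ∀ m₁ m₂, B.mEps a m₁ m₂ → B.mEps a m₂ m₁ := by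
    rintro m₁ m₂ ⟨x, y, hx, hy, e⟩
    exact ⟨y, x, hy, hx, heps_symm _ _ _ _ _ e⟩
  have mEps_trans : ∀ m₁ m₂ m₃, B.mEps a m₁ m₂ → B.mEps a m₂ m₃ →
      B.mEps a m₁ m₃ := by
    rintro m₁ m₂ m₃ ⟨x, y, hx, hy, e1⟩ ⟨u, v, hu, hv, e2⟩
    obtain ⟨v', hv', e3⟩ := hUnif a m₂ u m₃ v e2 y hy
    exact ⟨x, v', hx, hv', heps_trans _ _ _ _ _ _ _ e1 e3⟩
  have mEquiv : ∀ m₂, B.mEps a m m₂ ↔ B.mEps a m' m₂ := fun m₂ =>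
    ⟨fun hh => mEps_trans m' m m₂ (mEps_symm _ _ hmm') hh,
     fun hh => mEps_trans m m' m₂ hmm' hh⟩
  -- upgrading a single eps-link between members of cells to all members
  have corr_all : ∀ h₀ h₀', B.mem m h₀ → B.mem m' h₀' →
      B.eps a m h₀ m' h₀' →
      ∀ x ∈ B.choice a m h₀, ∀ x' ∈ B.choice a m' h₀', B.eps a m x m' x' := by
    intro h₀ h₀' hm₀ hm₀' e x hxc x' hx'c
    have e1 : B.eps a m x m' h₀' := hOAC a m h₀ m' h₀' e x hxc
    have e2 : B.eps a m' h₀' m x := heps_symm _ _ _ _ _ e1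
    have e3 : B.eps a m' x' m x := hOAC a m' h₀' m x e2 x' hx'c
    exact heps_symm _ _ _ _ _ e3
  -- corresponding cells have equal clusters everywhere
  have cluster_eq : ∀ h₀ h₀', B.mem m h₀ → B.mem m' h₀' →
      B.eps a m h₀ m' h₀' → ∀ m₂,
      B.cluster a m (B.choice a m h₀) m₂
        = B.cluster a m' (B.choice a m' h₀') m₂ := by
    intro h₀ h₀' hm₀ hm₀' e m₂
    ext k
    constructor
    · rintro ⟨hk, x, hxL, ex⟩
      have e1 : B.eps a m x m' h₀' :=
        corr_all h₀ h₀' hm₀ hm₀' e x hxL h₀' (hchoice_mem a m' h₀' hm₀')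
      exact ⟨hk, h₀', hchoice_mem a m' h₀' hm₀',
        heps_trans _ _ _ _ _ _ _ (heps_symm _ _ _ _ _ e1) ex⟩
    · rintro ⟨hk, x', hx'L, ex'⟩
      have e1 : B.eps a m h₀ m' x' :=
        corr_all h₀ h₀' hm₀ hm₀' e h₀ (hchoice_mem a m h₀ hm₀) x' hx'L
      exact ⟨hk, h₀, hchoice_mem a m h₀ hm₀,
        heps_trans _ _ _ _ _ _ _ e1 ex'⟩
  -- transfer of subjective dominance along cluster equality
  have domS_transfer : ∀ (P P' Q Q' : Set B.Hst),
      (∀ m₂, B.cluster a m P m₂ = B.cluster a m' P' m₂) →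
      (∀ m₂, B.cluster a m Q m₂ = B.cluster a m' Q' m₂) →
      (B.domS a m P Q ↔ B.domS a m' P' Q') := by
    intro P P' Q Q' hP hQ
    constructor
    · intro hd m₂ hm₂ S hS x hx y hy
      exact hd m₂ ((mEquiv m₂).mpr hm₂) S hS x (by rw [hP m₂]; exact hx)
        y (by rw [hQ m₂]; exact hy)
    · intro hd m₂ hm₂ S hS x hx y hy
      exact hd m₂ ((mEquiv m₂).mp hm₂) S hS x (by rw [← hP m₂]; exact hx)
        y (by rw [← hQ m₂]; exact hy)
  -- a witness eps-link between m and m'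
  obtain ⟨p, q, hp, hq, epq⟩ := hmm'
  -- now prove the subj statement at m'
  simp only [BTM.sat] at hs ⊢
  intro L' hL' htrig
  rw [hcells] at hL'
  obtain ⟨g', hg', rfl⟩ := hL'
  -- partner cell at m
  obtain ⟨g, hg, eg'⟩ :=
    hUnif a m' q m p (heps_symm _ _ _ _ _ epq) g' hg'
  have eg : B.eps a m g m' g' := heps_symm _ _ _ _ _ eg'
  have hLcells : B.choice a m g ∈ B.cells a m := by
    rw [hcells]; exact ⟨g, hg, rfl⟩
  have clEqL := cluster_eq g g' hg hg' eg
  -- transferred trigger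
  obtain ⟨m₂, hm₂, hk, hkcl, hknot⟩ := htrig
  have htrigm : ∃ m₂, B.mEps a m m₂ ∧
      ∃ hL ∈ B.cluster a m (B.choice a m g) m₂, ¬ B.sat φ m₂ hL :=
    ⟨m₂, (mEquiv m₂).mpr hm₂, hk, by rw [clEqL m₂]; exact hkcl, hknot⟩
  obtain ⟨N, hNcells, hsd, hopt⟩ := hs (B.choice a m g) hLcells htrigm
  obtain ⟨n, hn, rfl⟩ := (hcells a m ▸ hNcells :
    N ∈ {C | ∃ h, B.mem m h ∧ C = B.choice a m h})
  -- partner of N at m'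
  obtain ⟨n', hn', en⟩ := hUnif a m p m' q epq n hn
  have hN'cells : B.choice a m' n' ∈ B.cells a m' := by
    rw [hcells]; exact ⟨n', hn', rfl⟩
  have clEqN := cluster_eq n n' hn hn' en
  refine ⟨B.choice a m' n', hN'cells, ?_, ?_⟩
  · exact ⟨(domS_transfer _ _ _ _ clEqL clEqN).mp hsd.1,
      fun c => hsd.2 ((domS_transfer _ _ _ _ clEqN clEqL).mpr c)⟩
  · intro L'' hL''cells hdisj m₂ hm₂ k hkcl₂
    rw [hcells] at hL''cells
    obtain ⟨g₂', hg₂', rfl⟩ := hL''cells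
    rcases hdisj with hdisj | hdisj
    · -- L'' = N'
      have : k ∈ B.cluster a m (B.choice a m n) m₂ := by
        rw [clEqN m₂, ← hdisj]; exact hkcl₂
      exact hopt (B.choice a m n) hNcells (Or.inl rfl) m₂
        ((mEquiv m₂).mpr hm₂) k this
    · -- N' strictly dominates L''; use the partner of L'' at m
      obtain ⟨g₂, hg₂, eg₂'⟩ :=
        hUnif a m' q m p (heps_symm _ _ _ _ _ epq) g₂' hg₂'
      have eg₂ : B.eps a m g₂ m' g₂' := heps_symm _ _ _ _ _ eg₂'
      have hL₂cells : B.choice a m g₂ ∈ B.cells a m := by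
        rw [hcells]; exact ⟨g₂, hg₂, rfl⟩
      have clEq₂ := cluster_eq g₂ g₂' hg₂ hg₂' eg₂
      have hdom : B.domS a m (B.choice a m n) (B.choice a m g₂) :=
        (domS_transfer _ _ _ _ clEqN clEq₂).mpr hdisj
      have : k ∈ B.cluster a m (B.choice a m g₂) m₂ := by
        rw [clEq₂ m₂]; exact hkcl₂
      exact hopt (B.choice a m g₂) hL₂cells (Or.inr hdom) m₂
        ((mEquiv m₂).mpr hm₂) k this

/-- Soundness of the closure axiom `(Cl)`: in every epistemic act-utilitarian
branching-time model satisfying (OAC) and (Unif-H) (with `∼_α` an equivalence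
on situations and the choice structure a partition of the histories through a
moment), the formula `⊙_S[α]φ → K_α□⊙_S[α]φ` is true at every situation. -/
theorem statement19 {Ags : Type} (B : BTM Ags) (a : Ags) (φ : Form Ags)
    (heps_refl : ∀ b m h, B.mem m h → B.eps b m h m h)
    (heps_symm : ∀ b m h m' h', B.eps b m h m' h' → B.eps b m' h' m h)
    (heps_trans : ∀ b m h m' h' m'' h'',
      B.eps b m h m' h' → B.eps b m' h' m'' h'' → B.eps b m h m'' h'')
    (heps_mem : ∀ b m h m' h', B.eps b m h m' h' → B.mem m h ∧ B.mem m' h')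
    (hchoice_mem : ∀ b m h, B.mem m h → h ∈ B.choice b m h)
    (hchoice_sub : ∀ b m h, B.choice b m h ⊆ {h' | B.mem m h'})
    (hchoice_eq : ∀ b m h h', B.mem m h → h' ∈ B.choice b m h →
      B.choice b m h' = B.choice b m h)
    (hcells : ∀ b m, B.cells b m = {C | ∃ h, B.mem m h ∧ C = B.choice b m h})
    (hOAC : ∀ b m h m' h', B.eps b m h m' h' →
      ∀ h₂ ∈ B.choice b m h, B.eps b m h₂ m' h')
    (hUnif : ∀ b m h m' h', B.eps b m h m' h' →
      ∀ h₂, B.mem m h₂ → ∃ h₂', B.mem m' h₂' ∧ B.eps b m h₂ m' h₂')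
    (m : B.M) (h : B.Hst) (hmh : B.mem m h) :
    B.sat (Form.imp (Form.subj a φ)
      (Form.know a (Form.box (Form.subj a φ)))) m h := by
  intro hsubj m' h' he h'' hmem''
  have hmm' : B.mEps a m m' :=
    ⟨h, h', (heps_mem a m h m' h' he).1, (heps_mem a m h m' h' he).2, he⟩
  exact subj_transfer B a φ heps_symm heps_trans heps_mem hchoice_mem
    hchoice_eq hcells hOAC hUnif m m' h h'' hmm' hsubj
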